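/- Let p = 2. There is no 𝒞-function f : ℤ_2 → ℤ_2, point y ∈ ℤ_2, and ε > 0 such that f is ergodic on every sphere S_{2^{−r}}(y) of radius 2^{−r} < ε. In other words, for every 𝒞-function f, every y ∈ ℤ_2 and every ε > 0, there exists an integer r with 2^{−r} < ε such that f is not ergodic on S_{2^{−r}}(y). -/

import Mathlib

open MeasureTheory Filter

/-- Borel measurable structure on the `p`-adic integers. -/
noncomputable instance padicMS (p : ℕ) [Fact p.Prime] : MeasurableSpace ℤ_[p] := borel _

instance padicBS (p : ℕ) [Fact p.Prime] : BorelSpace ℤ_[p] := ⟨rfl⟩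

/-- The Haar measure `μ_p` on `ℤ_p`, normalized so that `μ_p(ℤ_p) = 1`. -/
noncomputable def padicHaar (p : ℕ) [Fact p.Prime] : Measure ℤ_[p] :=
  Measure.addHaarMeasure (⊤ : TopologicalSpace.PositiveCompacts ℤ_[p])

/-- The map `f̄_k : ℤ/p^kℤ → ℤ/p^kℤ` induced by `f : ℤ_p → ℤ_p` via reduction
modulo `p^k` (well-defined whenever `f` is compatible, i.e. 1-Lipschitz). -/
noncomputable def modMap (p : ℕ) [Fact p.Prime] (f : ℤ_[p] → ℤ_[p]) (k : ℕ) :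
    ZMod (p ^ k) → ZMod (p ^ k) :=
  fun z => PadicInt.toZModPow k (f ((z.val : ℕ) : ℤ_[p]))

/-- The map `F̄_k : (ℤ/p^kℤ)^n → (ℤ/p^kℤ)^m` induced by `F : ℤ_p^n → ℤ_p^m` via
coordinatewise reduction modulo `p^k` (well-defined whenever `F` is compatible). -/
noncomputable def modMapV (p : ℕ) [Fact p.Prime] {n m : ℕ}
    (F : (Fin n → ℤ_[p]) → (Fin m → ℤ_[p])) (k : ℕ) :
    (Fin n → ZMod (p ^ k)) → (Fin m → ZMod (p ^ k)) :=
  fun v i => PadicInt.toZModPow k (F (fun j => ((v j).val : ℤ_[p])) i)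

/-- The sphere `S_{p^{-r}}(y) = {z : ‖z - y‖ = p^{-r}}` in `ℤ_p`. -/
def padicSphere (p : ℕ) [Fact p.Prime] (y : ℤ_[p]) (r : ℕ) : Set ℤ_[p] :=
  {z : ℤ_[p] | ‖z - y‖ = (p : ℝ) ^ (-(r : ℤ))}

/-- The probability measure on the sphere `S_{p^{-r}}(y)`, obtained by restricting the
normalized Haar measure `μ_p` to the sphere and normalizing. -/
noncomputable def sphereMeasure (p : ℕ) [Fact p.Prime] (y : ℤ_[p]) (r : ℕ) : Measure ℤ_[p] :=
  (padicHaar p (padicSphere p y r))⁻¹ • (padicHaar p).restrict (padicSphere p y r)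

/-- `f` is ergodic on the sphere `S_{p^{-r}}(y)`: it maps the sphere into itself, preserves
the normalized restriction of the Haar measure to the sphere, and every invariant
measurable subset of the sphere has normalized measure `0` or `1`. -/
def ErgodicOnSphere (p : ℕ) [Fact p.Prime] (f : ℤ_[p] → ℤ_[p]) (y : ℤ_[p]) (r : ℕ) : Prop :=
  Set.MapsTo f (padicSphere p y r) (padicSphere p y r) ∧
  (∀ A : Set ℤ_[p], MeasurableSet A →
      sphereMeasure p y r (f ⁻¹' A) = sphereMeasure p y r A) ∧
  (∀ A : Set ℤ_[p], MeasurableSet A → A ⊆ padicSphere p y r →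
      f ⁻¹' A ∩ padicSphere p y r = A →
      sphereMeasure p y r A = 0 ∨ sphereMeasure p y r A = 1)

/-- `d ∈ ℤ_p` is primitive modulo `p²`: its image in `ℤ/p²ℤ` generates the whole
group of units `(ℤ/p²ℤ)ˣ`. -/
def PrimitiveModSq (p : ℕ) [Fact p.Prime] (d : ℤ_[p]) : Prop :=
  ∃ u : (ZMod (p ^ 2))ˣ, (u : ZMod (p ^ 2)) = PadicInt.toZModPow 2 d ∧
    ∀ v : (ZMod (p ^ 2))ˣ, v ∈ Subgroup.zpowers u

/-! ### Auxiliary lemmas for the proof -/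

open Finset in
lemma aux_key_split {R : Type*} [CommRing R] (y u : R) (i : ℕ) :
    ∃ q : R, (y + u) ^ i - y ^ i = ((i : R) * y ^ (i - 1) + u * q) * u := by
  refine ⟨∑ j ∈ range i, (∑ k ∈ range j, (y + u) ^ k * y ^ (j - 1 - k)) * y ^ (i - 1 - j), ?_⟩
  have h1 : (y + u) ^ i - y ^ i = (∑ j ∈ range i, (y + u) ^ j * y ^ (i - 1 - j)) * u := by
    have := geom_sum₂_mul (y + u) y i
    rw [add_sub_cancel_left] at this; exact this.symm
  have h2 : ∀ j ∈ range i, (y + u) ^ j * y ^ (i - 1 - j)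
      = y ^ (i - 1) + u * ((∑ k ∈ range j, (y + u) ^ k * y ^ (j - 1 - k)) * y ^ (i - 1 - j)) := by
    intro j hj
    have hji : j + (i - 1 - j) = i - 1 := by
      have : j < i := Finset.mem_range.1 hj; omega
    have h3 : (y + u) ^ j - y ^ j = (∑ k ∈ range j, (y + u) ^ k * y ^ (j - 1 - k)) * u := by
      have := geom_sum₂_mul (y + u) y j
      rw [add_sub_cancel_left] at this; exact this.symm
    calc (y + u) ^ j * y ^ (i - 1 - j)
        = y ^ j * y ^ (i - 1 - j) + ((y + u) ^ j - y ^ j) * y ^ (i - 1 - j) := by ring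
      _ = y ^ (i - 1) + u * ((∑ k ∈ range j, (y + u) ^ k * y ^ (j - 1 - k)) * y ^ (i - 1 - j)) := by
          rw [← pow_add, hji, h3]; ring
  rw [h1, Finset.sum_congr rfl h2, Finset.sum_add_distrib, Finset.sum_const, Finset.card_range,
    ← Finset.mul_sum, nsmul_eq_mul]

lemma aux_summable (a : ℕ → ℤ_[2]) (ha : Tendsto (fun i => ‖a i‖) atTop (nhds 0))
    (c : ℕ → ℤ_[2]) (h : ∀ i, ‖c i‖ ≤ ‖a i‖) : Summable c := by
  apply NonarchimedeanAddGroup.summable_of_tendsto_cofinite_zero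
  rw [tendsto_zero_iff_norm_tendsto_zero, Nat.cofinite_eq_atTop]
  exact squeeze_zero (fun i => norm_nonneg _) h ha

lemma aux_taylor (a : ℕ → ℤ_[2]) (ha : Tendsto (fun i => ‖a i‖) atTop (nhds 0))
    (f : ℤ_[2] → ℤ_[2]) (hf : ∀ x : ℤ_[2], f x = ∑' i : ℕ, a i * x ^ i) (y : ℤ_[2]) :
    ∃ D : ℤ_[2], ∀ u : ℤ_[2], ∃ Q : ℤ_[2], f (y + u) = f y + D * u + u ^ 2 * Q := by
  refine ⟨∑' i, a i * ((i : ℤ_[2]) * y ^ (i - 1)), fun u => ?_⟩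
  choose q hq using fun i => aux_key_split y u i
  refine ⟨∑' i, a i * q i, ?_⟩
  have bound : ∀ (c : ℕ → ℤ_[2]), (∀ i, ∃ x, c i = a i * x) → Summable c := by
    intro c hc
    refine aux_summable a ha c fun i => ?_
    obtain ⟨x, hx⟩ := hc i
    rw [hx, norm_mul]
    exact mul_le_of_le_one_right (norm_nonneg _) (PadicInt.norm_le_one x)
  have S2 : Summable (fun i => a i * y ^ i) := bound _ fun i => ⟨_, rfl⟩
  have S3 : Summable (fun i => a i * ((i : ℤ_[2]) * y ^ (i - 1))) := bound _ fun i => ⟨_, rfl⟩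
  have S4 : Summable (fun i => a i * q i) := bound _ fun i => ⟨_, rfl⟩
  have key : ∀ i : ℕ, a i * (y + u) ^ i
      = (a i * y ^ i + a i * ((i : ℤ_[2]) * y ^ (i - 1)) * u) + a i * q i * u ^ 2 := by
    intro i
    linear_combination a i * hq i
  calc f (y + u) = ∑' i, a i * (y + u) ^ i := hf _
    _ = ∑' i, ((a i * y ^ i + a i * ((i : ℤ_[2]) * y ^ (i - 1)) * u) + a i * q i * u ^ 2) :=
        tsum_congr key
    _ = (∑' i, (a i * y ^ i + a i * ((i : ℤ_[2]) * y ^ (i - 1)) * u))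
        + (∑' i, a i * q i * u ^ 2) :=
        Summable.tsum_add (S2.add (S3.mul_right u)) (S4.mul_right (u ^ 2))
    _ = ((∑' i, a i * y ^ i) + (∑' i, a i * ((i : ℤ_[2]) * y ^ (i - 1)) * u))
        + (∑' i, a i * q i) * u ^ 2 := by
        rw [Summable.tsum_add S2 (S3.mul_right u), S4.tsum_mul_right]
    _ = f y + (∑' i, a i * ((i : ℤ_[2]) * y ^ (i - 1))) * u + u ^ 2 * (∑' i, a i * q i) := by
        rw [← hf, S3.tsum_mul_right]; ring

lemma aux_dvd_iff_norm_le (x : ℤ_[2]) (n : ℕ) :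
    (2 : ℤ_[2]) ^ n ∣ x ↔ ‖x‖ ≤ (2 : ℝ) ^ (-(n : ℤ)) := by
  have h := PadicInt.norm_le_pow_iff_mem_span_pow x n (p := 2)
  rw [Ideal.mem_span_singleton] at h
  push_cast at h
  exact h.symm

lemma aux_two_dvd_or (x : ℤ_[2]) : (2 : ℤ_[2]) ∣ x ∨ (2 : ℤ_[2]) ∣ x - 1 := by
  have hs := PadicInt.appr_spec 1 x
  have hl := PadicInt.appr_lt x 1
  rw [Ideal.mem_span_singleton] at hs
  norm_num at hs hl
  have h01 : x.appr 1 = 0 ∨ x.appr 1 = 1 := by omega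
  rcases h01 with h | h <;> rw [h] at hs
  · left; simpa using hs
  · right; simpa using hs

lemma aux_norm_two_pow (n : ℕ) : ‖(2 : ℤ_[2]) ^ n‖ = (2 : ℝ) ^ (-(n : ℤ)) := by
  have := PadicInt.norm_p_pow (p := 2) n
  push_cast at this
  exact this

lemma aux_unit_norm (x : ℤ_[2]) (hx : ¬ (2 : ℤ_[2]) ∣ x) : ‖x‖ = 1 := by
  refine le_antisymm (PadicInt.norm_le_one x) ?_
  by_contra h
  push_neg at h
  exact hx (by
    have := (PadicInt.norm_lt_one_iff_dvd x).1 h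
    simpa using this)

lemma aux_sphere_eq (y : ℤ_[2]) (r : ℕ) :
    padicSphere 2 y r = {x : ℤ_[2] | (2 : ℤ_[2]) ^ (r + 1) ∣ x - (y + 2 ^ r)} := by
  ext x
  simp only [padicSphere, Set.mem_setOf_eq]
  push_cast
  constructor
  · intro hx
    have h1 : (2 : ℤ_[2]) ^ r ∣ x - y := by
      rw [aux_dvd_iff_norm_le, hx]
    obtain ⟨e, he⟩ := h1
    have hne : ‖e‖ = 1 := by
      have h0 := hx
      rw [he, norm_mul, aux_norm_two_pow] at h0
      have h2 : ((2 : ℝ) ^ (-(r : ℤ))) ≠ 0 := by positivity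
      field_simp at h0
      exact h0
    have he2 : ¬ (2 : ℤ_[2]) ∣ e := by
      intro hd
      have := (PadicInt.norm_lt_one_iff_dvd e).2 (by simpa using hd)
      rw [hne] at this; exact lt_irrefl _ this
    rcases aux_two_dvd_or e with h | h
    · exact absurd h he2
    · obtain ⟨m, hm⟩ := h
      refine ⟨m, ?_⟩
      have hh : x - (y + 2 ^ r) = 2 ^ r * (e - 1) := by linear_combination he
      rw [hh, hm, pow_succ]; ring
  · rintro ⟨m, hm⟩
    have hx : x - y = 2 ^ r * (1 + 2 * m) := by
      have hh : x - y = (x - (y + 2 ^ r)) + 2 ^ r := by ring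
      rw [hh, hm, pow_succ]; ring
    have hu : ‖(1 + 2 * m : ℤ_[2])‖ = 1 := by
      apply aux_unit_norm
      rintro ⟨c, hc⟩
      have hd : (2 : ℤ_[2]) ∣ 1 := ⟨c - m, by linear_combination hc⟩
      have h1 := (PadicInt.norm_lt_one_iff_dvd 1).2 (by exact_mod_cast hd)
      simp at h1
    rw [hx, norm_mul, hu, mul_one, aux_norm_two_pow]

lemma aux_coset_meas (k : ℕ) (z : ℤ_[2]) :
    MeasurableSet {x : ℤ_[2] | (2 : ℤ_[2]) ^ k ∣ x - z} := by
  have hball : {x : ℤ_[2] | (2 : ℤ_[2]) ^ k ∣ x - z}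
      = Metric.closedBall z ((2 : ℝ) ^ (-(k : ℤ))) := by
    ext x
    simp only [Set.mem_setOf_eq, Metric.mem_closedBall, dist_eq_norm, aux_dvd_iff_norm_le]
  rw [hball]; exact measurableSet_closedBall

lemma aux_coset_measure (k : ℕ) (z : ℤ_[2]) :
    padicHaar 2 {x : ℤ_[2] | (2 : ℤ_[2]) ^ k ∣ x - z} = ((2 : ENNReal) ^ k)⁻¹ := by
  haveI : (padicHaar 2).IsAddLeftInvariant := Measure.isAddLeftInvariant_addHaarMeasure _
  have htrans : ∀ w : ℤ_[2], padicHaar 2 {x : ℤ_[2] | (2 : ℤ_[2]) ^ k ∣ x - w}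
      = padicHaar 2 {x : ℤ_[2] | (2 : ℤ_[2]) ^ k ∣ x - z} := by
    intro w
    have h1 : {x : ℤ_[2] | (2 : ℤ_[2]) ^ k ∣ x - w}
        = (fun x => (z - w) + x) ⁻¹' {x : ℤ_[2] | (2 : ℤ_[2]) ^ k ∣ x - z} := by
      ext x
      simp only [Set.mem_setOf_eq, Set.mem_preimage]
      have hh : z - w + x - z = x - w := by ring
      rw [hh]
    rw [h1, measure_preimage_add]
  have hcover : (Set.univ : Set ℤ_[2])
      = ⋃ j ∈ Finset.range (2 ^ k), {x : ℤ_[2] | (2 : ℤ_[2]) ^ k ∣ x - (j : ℤ_[2])} := by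
    ext x
    simp only [Set.mem_univ, true_iff, Set.mem_iUnion, Set.mem_setOf_eq, Finset.mem_range]
    refine ⟨x.appr k, PadicInt.appr_lt x k, ?_⟩
    have hs := PadicInt.appr_spec k x
    rw [Ideal.mem_span_singleton] at hs
    have : ((2 : ℕ) : ℤ_[2]) = (2 : ℤ_[2]) := by norm_num
    rwa [this] at hs
  have hdisj : (Finset.range (2 ^ k) : Set ℕ).PairwiseDisjoint
      (fun j : ℕ => {x : ℤ_[2] | (2 : ℤ_[2]) ^ k ∣ x - (j : ℤ_[2])}) := by
    intro i hi j hj hij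
    simp only [Finset.coe_range, Set.mem_Iio] at hi hj
    rw [Function.onFun, Set.disjoint_left]
    intro x hxi hxj
    have h1 : (2 : ℤ_[2]) ^ k ∣ x - (i : ℤ_[2]) := hxi
    have h2 : (2 : ℤ_[2]) ^ k ∣ x - (j : ℤ_[2]) := hxj
    have hd0 : (2 : ℤ_[2]) ^ k ∣ (j : ℤ_[2]) - (i : ℤ_[2]) := by
      have hds := dvd_sub h1 h2
      have he : (x - (i : ℤ_[2])) - (x - (j : ℤ_[2])) = (j : ℤ_[2]) - (i : ℤ_[2]) := by ring
      rwa [he] at hds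
    have hd : (((j : ℤ) - (i : ℤ) : ℤ) : ℤ_[2]) = (j : ℤ_[2]) - (i : ℤ_[2]) := by push_cast; ring
    rw [← hd] at hd0
    rw [aux_dvd_iff_norm_le] at hd0
    have hd2 : ((2 ^ k : ℕ) : ℤ) ∣ ((j : ℤ) - (i : ℤ)) := by
      have := (PadicInt.norm_int_le_pow_iff_dvd (p := 2) (k := (j : ℤ) - (i : ℤ)) (n := k)).1
        (by push_cast at hd0 ⊢; exact hd0)
      exact_mod_cast this
    have hi' : ((i : ℤ)) < ((2 ^ k : ℕ) : ℤ) := by exact_mod_cast hi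
    have hj' : ((j : ℤ)) < ((2 ^ k : ℕ) : ℤ) := by exact_mod_cast hj
    have hz : ((j : ℤ) - (i : ℤ)) = 0 := by
      refine Int.eq_zero_of_abs_lt_dvd hd2 ?_
      rw [abs_sub_lt_iff]
      constructor <;> omega
    have hij2 : i = j := by omega
    exact hij hij2
  have huniv : padicHaar 2 (Set.univ : Set ℤ_[2]) = 1 := by
    have := Measure.addHaarMeasure_self (K₀ := (⊤ : TopologicalSpace.PositiveCompacts ℤ_[2]))
    simpa [padicHaar] using this
  rw [hcover, measure_biUnion_finset hdisj (fun j _ => aux_coset_meas k _)] at huniv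
  have hsum : ∀ j ∈ Finset.range (2 ^ k),
      padicHaar 2 {x : ℤ_[2] | (2 : ℤ_[2]) ^ k ∣ x - (j : ℤ_[2])}
      = padicHaar 2 {x : ℤ_[2] | (2 : ℤ_[2]) ^ k ∣ x - z} := fun j _ => htrans _
  rw [Finset.sum_congr rfl hsum, Finset.sum_const, Finset.card_range, nsmul_eq_mul] at huniv
  have hcast : ((2 ^ k : ℕ) : ENNReal) = (2 : ENNReal) ^ k := by push_cast; ring
  rw [hcast] at huniv
  have h0 : ((2 : ENNReal) ^ k) ≠ 0 := by positivity
  have ht : ((2 : ENNReal) ^ k) ≠ ⊤ := ENNReal.pow_ne_top (by norm_num)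
  calc padicHaar 2 {x : ℤ_[2] | (2 : ℤ_[2]) ^ k ∣ x - z}
      = ((2 : ENNReal) ^ k)⁻¹ * ((2 : ENNReal) ^ k
        * padicHaar 2 {x : ℤ_[2] | (2 : ℤ_[2]) ^ k ∣ x - z}) := by
        rw [← mul_assoc, ENNReal.inv_mul_cancel h0 ht, one_mul]
    _ = ((2 : ENNReal) ^ k)⁻¹ := by rw [huniv, mul_one]

/-- For `p = 2`, no `𝒞`-function is ergodic on all sufficiently small spheres around a
point `y ∈ ℤ_2`: for every `𝒞`-function `f`, every `y` and every `ε > 0` there is a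
sphere around `y` of radius `2^{-r} < ε` on which `f` fails to be ergodic. -/
theorem no_CFunction_ergodic_on_all_small_spheres_two
    (a : ℕ → ℤ_[2]) (ha : Tendsto (fun i => ‖a i‖) atTop (nhds 0))
    (f : ℤ_[2] → ℤ_[2]) (hf : ∀ x : ℤ_[2], f x = ∑' i : ℕ, a i * x ^ i)
    (y : ℤ_[2]) (ε : ℝ) (hε : 0 < ε) :
    ∃ r : ℕ, (2 : ℝ) ^ (-(r : ℤ)) < ε ∧ ¬ ErgodicOnSphere 2 f y r := by
  by_contra hcon
  push_neg at hcon
  obtain ⟨D, hD⟩ := aux_taylor a ha f hf y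
  obtain ⟨r₀, hr₀⟩ : ∃ r₀ : ℕ, (2 : ℝ) ^ (-(r₀ : ℤ)) < ε := by
    obtain ⟨k, hk⟩ := PadicInt.exists_pow_neg_lt 2 hε
    exact ⟨k, by push_cast at hk; exact hk⟩
  have hmono : ∀ n : ℕ, r₀ ≤ n → (2 : ℝ) ^ (-(n : ℤ)) < ε := by
    intro n hn
    refine lt_of_le_of_lt ?_ hr₀
    exact zpow_le_zpow_right₀ one_le_two (by omega)
  have hsph : ∀ n : ℕ, (y + 2 ^ n) ∈ padicSphere 2 y n := by
    intro n
    show ‖y + 2 ^ n - y‖ = ((2 : ℕ) : ℝ) ^ (-(n : ℤ))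
    rw [add_sub_cancel_left, aux_norm_two_pow]
    norm_num
  have herg : ∀ n : ℕ, r₀ ≤ n → ErgodicOnSphere 2 f y n := fun n hn => hcon n (hmono n hn)
  have hmaps : ∀ n : ℕ, r₀ ≤ n → ‖f (y + 2 ^ n) - y‖ = (2 : ℝ) ^ (-(n : ℤ)) := by
    intro n hn
    have := (herg n hn).1 (hsph n)
    have h2 : ‖f (y + 2 ^ n) - y‖ = ((2 : ℕ) : ℝ) ^ (-(n : ℤ)) := this
    rw [h2]; norm_num
  -- f y = y
  have hw : f y = y := by
    have key : ∀ n : ℕ, r₀ ≤ n → ‖f y - y‖ ≤ (2 : ℝ) ^ (-(n : ℤ)) := by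
      intro n hn
      obtain ⟨Q, hQ⟩ := hD (2 ^ n)
      have h1 : (2 : ℤ_[2]) ^ n ∣ f (y + 2 ^ n) - y := by
        rw [aux_dvd_iff_norm_le, hmaps n hn]
      have h2 : (2 : ℤ_[2]) ^ n ∣ f y - y := by
        have he : f y - y = (f (y + 2 ^ n) - y) - ((2:ℤ_[2]) ^ n * D + 2 ^ n * (2 ^ n * Q)) := by
          rw [hQ]; ring
        rw [he]
        exact dvd_sub h1 (dvd_add ⟨D, rfl⟩ ⟨2 ^ n * Q, rfl⟩)
      exact (aux_dvd_iff_norm_le _ n).1 h2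
    have htend : Tendsto (fun n : ℕ => (2 : ℝ) ^ (-(n : ℤ))) atTop (nhds 0) := by
      have hpt : ∀ n : ℕ, (2 : ℝ) ^ (-(n : ℤ)) = (1 / 2 : ℝ) ^ n := by
        intro n
        rw [zpow_neg, zpow_natCast, one_div, inv_pow]
      rw [funext hpt]
      exact tendsto_pow_atTop_nhds_zero_of_lt_one (by norm_num) (by norm_num)
    have hle : ‖f y - y‖ ≤ 0 :=
      ge_of_tendsto htend (eventually_atTop.2 ⟨r₀, key⟩)
    exact sub_eq_zero.1 (norm_le_zero_iff.1 hle)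
  -- work at radius r = r₀ + 3
  obtain ⟨hmapsTo, -, hergodic⟩ := herg (r₀ + 3) (by omega)
  -- D is odd
  have hDodd : ¬ (2 : ℤ_[2]) ∣ D := by
    rintro ⟨D', hD'⟩
    obtain ⟨Q, hQ⟩ := hD (2 ^ (r₀ + 3))
    have h1 : ‖f (y + 2 ^ (r₀ + 3)) - y‖ = (2 : ℝ) ^ (-((r₀ : ℤ) + 3)) := by
      have := hmaps (r₀ + 3) (by omega)
      rw [this]; push_cast; ring_nf
    have h2 : (2 : ℤ_[2]) ^ (r₀ + 4) ∣ f (y + 2 ^ (r₀ + 3)) - y := by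
      refine ⟨D' + 2 ^ (r₀ + 2) * Q, ?_⟩
      rw [hQ, hw, hD']; ring
    rw [aux_dvd_iff_norm_le, h1] at h2
    have hlt : (2 : ℝ) ^ (-((r₀ : ℤ) + 4)) < (2 : ℝ) ^ (-((r₀ : ℤ) + 3)) :=
      zpow_lt_zpow_right₀ one_lt_two (by omega)
    have hcast : (-(((r₀ : ℕ) + 4 : ℕ) : ℤ)) = (-((r₀ : ℤ) + 4)) := by push_cast; ring
    rw [hcast] at h2
    linarith
  obtain ⟨c, hc⟩ := (aux_two_dvd_or D).resolve_left hDodd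
  have hDc : D = 1 + 2 * c := by linear_combination hc
  -- the balls
  set Ball : ℤ_[2] → Set ℤ_[2] :=
    fun t => {x : ℤ_[2] | (2 : ℤ_[2]) ^ (r₀ + 6) ∣ x - (y + 2 ^ (r₀ + 3) + 2 ^ (r₀ + 4) * t)}
    with hBallDef
  have hmap : ∀ t : ℤ_[2], ∀ x ∈ Ball t, f x ∈ Ball (c + D * t) := by
    intro t x hx
    obtain ⟨e, he⟩ := hx
    obtain ⟨Q, hQ⟩ := hD (2 ^ (r₀ + 3) + 2 ^ (r₀ + 4) * t + 2 ^ (r₀ + 6) * e)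
    have hxe : x = y + (2 ^ (r₀ + 3) + 2 ^ (r₀ + 4) * t + 2 ^ (r₀ + 6) * e) := by
      linear_combination he
    show (2 : ℤ_[2]) ^ (r₀ + 6) ∣ f x - (y + 2 ^ (r₀ + 3) + 2 ^ (r₀ + 4) * (c + D * t))
    rw [hxe, hQ, hw, hDc]
    refine ⟨(1 + 2 * c) * e + 2 ^ r₀ * (1 + 2 * t + 2 ^ 3 * e) ^ 2 * Q, ?_⟩
    ring
  have hadj : ∀ t t' : ℤ_[2], (4 : ℤ_[2]) ∣ t - t' → Ball t = Ball t' := by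
    rintro t t' ⟨m, hm⟩
    ext x
    simp only [hBallDef, Set.mem_setOf_eq]
    constructor <;> rintro ⟨e, he⟩
    · exact ⟨e + m, by linear_combination he + (2 : ℤ_[2]) ^ (r₀ + 4) * hm⟩
    · exact ⟨e - m, by linear_combination he - (2 : ℤ_[2]) ^ (r₀ + 4) * hm⟩
  have hsep : ∀ t t' : ℤ_[2], ∀ x : ℤ_[2], x ∈ Ball t → x ∈ Ball t' →
      (4 : ℤ_[2]) ∣ t - t' := by
    rintro t t' x ⟨e, he⟩ ⟨e', he'⟩
    refine ⟨e' - e, ?_⟩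
    have hcan : (2 : ℤ_[2]) ^ (r₀ + 4) * (t - t') = 2 ^ (r₀ + 4) * (4 * (e' - e)) := by
      linear_combination he' - he
    exact mul_left_cancel₀ (pow_ne_zero _ (by norm_num : (2 : ℤ_[2]) ≠ 0)) hcan
  have hcover : ∀ x ∈ padicSphere 2 y (r₀ + 3), ∃ m : ℤ_[2], x ∈ Ball m := by
    intro x hx
    rw [aux_sphere_eq] at hx
    obtain ⟨m, hm⟩ := hx
    refine ⟨m, 0, ?_⟩
    have h4 : (2 : ℤ_[2]) ^ (r₀ + 3 + 1) = 2 ^ (r₀ + 4) := by ring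
    rw [h4] at hm
    linear_combination hm
  have hBallSub : ∀ t : ℤ_[2], Ball t ⊆ padicSphere 2 y (r₀ + 3) := by
    rintro t x ⟨e, he⟩
    rw [aux_sphere_eq]
    exact ⟨t + 4 * e, by linear_combination he⟩
  have hfour_c : (4 : ℤ_[2]) ∣ c + D * c := by
    rcases aux_two_dvd_or c with ⟨m, hm⟩ | ⟨m, hm⟩
    · exact ⟨m + 2 * m ^ 2, by rw [hDc, hm]; ring⟩
    · have hcm : c = 2 * m + 1 := by linear_combination hm
      exact ⟨2 * m ^ 2 + 3 * m + 1, by rw [hDc, hcm]; ring⟩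
  have hprime : Prime (2 : ℤ_[2]) := by
    have := PadicInt.prime_p (p := 2)
    have h2 : ((2 : ℕ) : ℤ_[2]) = (2 : ℤ_[2]) := by norm_num
    rwa [h2] at this
  have hDcancel : ∀ z : ℤ_[2], (4 : ℤ_[2]) ∣ D * z → (4 : ℤ_[2]) ∣ z := by
    rintro z ⟨m, hm⟩
    have h2z : (2 : ℤ_[2]) ∣ z := by
      refine (hprime.dvd_mul.1 ⟨2 * m, by linear_combination hm⟩).resolve_left hDodd
    obtain ⟨z', hz'⟩ := h2z
    have hm2 : D * z' = 2 * m := by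
      have : (2 : ℤ_[2]) * (D * z') = 2 * (2 * m) := by
        rw [← mul_assoc, mul_comm (2 : ℤ_[2]) D, mul_assoc, ← hz']; linear_combination hm
      exact mul_left_cancel₀ (by norm_num : (2 : ℤ_[2]) ≠ 0) this
    have h2z' : (2 : ℤ_[2]) ∣ z' :=
      (hprime.dvd_mul.1 ⟨m, hm2⟩).resolve_left hDodd
    obtain ⟨z'', hz''⟩ := h2z'
    exact ⟨z'', by rw [hz', hz'']; ring⟩
  -- the invariant set
  set A : Set ℤ_[2] := Ball 0 ∪ Ball c with hAdef
  have hAmeas : MeasurableSet A :=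
    (aux_coset_meas (r₀ + 6) _).union (aux_coset_meas (r₀ + 6) _)
  have hAsub : A ⊆ padicSphere 2 y (r₀ + 3) := by
    rintro x (hx | hx)
    · exact hBallSub 0 hx
    · exact hBallSub c hx
  have hInv : f ⁻¹' A ∩ padicSphere 2 y (r₀ + 3) = A := by
    ext x
    constructor
    · rintro ⟨hfx, hxS⟩
      obtain ⟨m, hxm⟩ := hcover x hxS
      have hfm : f x ∈ Ball (c + D * m) := hmap m x hxm
      rcases hfx with hf0 | hfc
      · -- f x ∈ Ball 0 : 4 ∣ (c + D m) - 0, so 4 ∣ D(m - c), so Ball m = Ball c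
        have h40 : (4 : ℤ_[2]) ∣ (c + D * m) - 0 := hsep _ _ _ hfm hf0
        have hDm : (4 : ℤ_[2]) ∣ D * (m - c) := by
          obtain ⟨w, hw1⟩ := h40
          obtain ⟨w', hw2⟩ := hfour_c
          exact ⟨w - w', by linear_combination hw1 - hw2⟩
        have h4mc := hDcancel _ hDm
        right
        rw [← hadj m c h4mc]
        exact hxm
      · -- f x ∈ Ball c : 4 ∣ D m, so Ball m = Ball 0
        have h4c : (4 : ℤ_[2]) ∣ (c + D * m) - c := hsep _ _ _ hfm hfc
        have hDm : (4 : ℤ_[2]) ∣ D * m := by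
          obtain ⟨w, hw1⟩ := h4c
          exact ⟨w, by linear_combination hw1⟩
        have h4m := hDcancel _ hDm
        left
        have hm0 : (4 : ℤ_[2]) ∣ m - 0 := by simpa using h4m
        rw [← hadj m 0 hm0]
        exact hxm
    · intro hx
      refine ⟨?_, hAsub hx⟩
      rcases hx with hx0 | hxc
      · have := hmap 0 x hx0
        have heq : Ball (c + D * 0) = Ball c := hadj _ _ (by simp)
        rw [heq] at this
        exact Or.inr this
      · have := hmap c x hxc
        have heq : Ball (c + D * c) = Ball 0 := hadj _ _ (by simpa using hfour_c)
        rw [heq] at this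
        exact Or.inl this
  -- measures
  have hμS : padicHaar 2 (padicSphere 2 y (r₀ + 3)) = ((2 : ENNReal) ^ (r₀ + 4))⁻¹ := by
    rw [aux_sphere_eq]
    have := aux_coset_measure (r₀ + 3 + 1) (y + 2 ^ (r₀ + 3))
    simpa using this
  have hBall0 : padicHaar 2 (Ball 0) = ((2 : ENNReal) ^ (r₀ + 6))⁻¹ := by
    have := aux_coset_measure (r₀ + 6) (y + 2 ^ (r₀ + 3) + 2 ^ (r₀ + 4) * 0)
    simpa [hBallDef] using this
  have hBallc : padicHaar 2 (Ball c) = ((2 : ENNReal) ^ (r₀ + 6))⁻¹ := by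
    have := aux_coset_measure (r₀ + 6) (y + 2 ^ (r₀ + 3) + 2 ^ (r₀ + 4) * c)
    simpa [hBallDef] using this
  have hlow : ((2 : ENNReal) ^ (r₀ + 6))⁻¹ ≤ padicHaar 2 A := by
    rw [← hBall0]; exact measure_mono Set.subset_union_left
  have hhigh : padicHaar 2 A ≤ ((2 : ENNReal) ^ (r₀ + 5))⁻¹ := by
    refine le_trans (measure_union_le _ _) ?_
    rw [hBall0, hBallc, ← two_mul]
    have h1 : ((2 : ENNReal) ^ (r₀ + 6))⁻¹ = 2⁻¹ * ((2 : ENNReal) ^ (r₀ + 5))⁻¹ := by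
      rw [← ENNReal.mul_inv (Or.inl (by norm_num)) (Or.inl (by norm_num))]
      ring_nf
    rw [h1, ← mul_assoc, ENNReal.mul_inv_cancel (by norm_num) (by norm_num), one_mul]
  have hv : sphereMeasure 2 y (r₀ + 3) A = (2 : ENNReal) ^ (r₀ + 4) * padicHaar 2 A := by
    rw [sphereMeasure, Measure.smul_apply, smul_eq_mul,
      Measure.restrict_apply hAmeas, Set.inter_eq_left.2 hAsub, hμS, inv_inv]
  have hpow_ne_top : ∀ m : ℕ, ((2 : ENNReal) ^ m) ≠ ⊤ := fun m => ENNReal.pow_ne_top (by norm_num)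
  have hvlow : (4 : ENNReal)⁻¹ ≤ sphereMeasure 2 y (r₀ + 3) A := by
    rw [hv]
    calc (4 : ENNReal)⁻¹
        = (2 : ENNReal) ^ (r₀ + 4) * ((2 : ENNReal) ^ (r₀ + 6))⁻¹ := by
          have he : ((2 : ENNReal) ^ (r₀ + 6)) = (2 : ENNReal) ^ (r₀ + 4) * 4 := by
            rw [show r₀ + 6 = (r₀ + 4) + 2 by omega, pow_add]; norm_num
          rw [he, ENNReal.mul_inv (Or.inl (by positivity)) (Or.inl (hpow_ne_top _)),
            ← mul_assoc, ENNReal.mul_inv_cancel (by positivity) (hpow_ne_top _), one_mul]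
      _ ≤ (2 : ENNReal) ^ (r₀ + 4) * padicHaar 2 A := by
          exact mul_le_mul_right hlow _
  have hvhigh : sphereMeasure 2 y (r₀ + 3) A ≤ (2 : ENNReal)⁻¹ := by
    rw [hv]
    calc (2 : ENNReal) ^ (r₀ + 4) * padicHaar 2 A
        ≤ (2 : ENNReal) ^ (r₀ + 4) * ((2 : ENNReal) ^ (r₀ + 5))⁻¹ := mul_le_mul_right hhigh _
      _ = (2 : ENNReal)⁻¹ := by
          have he : ((2 : ENNReal) ^ (r₀ + 5)) = (2 : ENNReal) ^ (r₀ + 4) * 2 := by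
            rw [show r₀ + 5 = (r₀ + 4) + 1 by omega, pow_add]; norm_num
          rw [he, ENNReal.mul_inv (Or.inl (by positivity)) (Or.inl (hpow_ne_top _)),
            ← mul_assoc, ENNReal.mul_inv_cancel (by positivity) (hpow_ne_top _), one_mul]
  rcases hergodic A hAmeas hAsub hInv with h0 | h1
  · rw [h0] at hvlow
    simp at hvlow
  · rw [h1] at hvhigh
    have hlt : (2 : ENNReal)⁻¹ < 1 := by norm_num
    exact absurd hvhigh (not_le.2 hlt)
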